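/- The function g(x,y) = ((1-x-y)/(x+y))·((1-y)/y) is strictly convex on the set C_g = {(x,y) : x>0, y>0, x+y<1, x+2y-xy-y² < 3/4}. -/

import Mathlib

set_option maxHeartbeats 1000000

open Set

private lemma comb_pos (a b u v : ℝ) (ha : 0 ≤ a) (hb : 0 ≤ b) (hab : a + b = 1)
    (hu : 0 < u) (hv : 0 < v) : 0 < a * u + b * v := by
  rcases lt_or_eq_of_le ha with h | h
  · nlinarith [mul_nonneg hb hv.le]
  · nlinarith

private lemma cross_gt (A1 B1 A2 B2 : ℝ) (hA1 : 0 < A1) (hB1 : 0 < B1)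
    (hA2 : 0 < A2) (hB2 : 0 < B2) (h1 : 1 < 4*A1*B1) (h2 : 1 < 4*A2*B2) :
    1/2 < A1*B2 + A2*B1 := by
  have hs : 0 < A1*B2 + A2*B1 := by positivity
  have h16 : 1/16 < (A1*B2) * (A2*B1) := by
    nlinarith [mul_pos (sub_pos.mpr h1) (sub_pos.mpr h2)]
  nlinarith [sq_nonneg (A1*B2 - A2*B1), h16, hs]

private lemma seg_cond (s1 y1 s2 y2 t : ℝ)
    (hs1 : 0 < s1) (hs1' : s1 < 1) (hy1 : 0 < y1) (hq1 : 1 < 4*(1-s1)*(1-y1))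
    (hs2 : 0 < s2) (hs2' : s2 < 1) (hy2 : 0 < y2) (hq2 : 1 < 4*(1-s2)*(1-y2))
    (ht0 : 0 ≤ t) (ht1 : t ≤ 1) :
    0 < (1-t)*s1 + t*s2 ∧ (1-t)*s1 + t*s2 < 1 ∧ 0 < (1-t)*y1 + t*y2 ∧
      1 < 4*(1-((1-t)*s1 + t*s2))*(1-((1-t)*y1 + t*y2)) := by
  have hA1 : 0 < 1 - s1 := by linarith
  have hA2 : 0 < 1 - s2 := by linarith
  have hB1 : 0 < 1 - y1 := by nlinarith
  have hB2 : 0 < 1 - y2 := by nlinarith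
  refine ⟨comb_pos (1-t) t s1 s2 (by linarith) ht0 (by ring) hs1 hs2,
    by nlinarith [comb_pos (1-t) t (1-s1) (1-s2) (by linarith) ht0 (by ring) hA1 hA2],
    comb_pos (1-t) t y1 y2 (by linarith) ht0 (by ring) hy1 hy2, ?_⟩
  have hc := cross_gt (1-s1) (1-y1) (1-s2) (1-y2) hA1 hB1 hA2 hB2 hq1 hq2
  have hc1 : 0 < 4*(1-s1)*(1-y1) - 1 := by linarith
  have hc2 : 0 < 4*(1-s2)*(1-y2) - 1 := by linarith
  nlinarith [sq_nonneg ((1-t)*(4*(1-s1)*(1-y1)-1) - t*(4*(1-s2)*(1-y2)-1)),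
    mul_pos hc1 hc2,
    mul_nonneg (mul_nonneg ht0 (by linarith : (0:ℝ) ≤ 1-t))
      (by linarith : (0:ℝ) ≤ (1-s1)*(1-y2) + (1-s2)*(1-y1) - 1/2),
    mul_nonneg (sq_nonneg (1-t)) hc1.le, mul_nonneg (sq_nonneg t) hc2.le]

private lemma h2_eq (xt yt ds dy : ℝ) (hx : xt ≠ 0) (hy : yt ≠ 0) :
    ((2*ds^2 / xt^3) * ((1 - yt) / yt) + (-ds / xt^2) * (-dy / yt^2))
      + ((-ds / xt^2) * (-dy / yt^2) + ((1 - xt) / xt) * (2*dy^2 / yt^3))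
    = 2*(ds^2*(1 - yt)*yt^2 + ds*dy*xt*yt + dy^2*(1 - xt)*xt^2) / (xt^3 * yt^3) := by
  field_simp
  ring

private lemma strict_aux (s0 y0 ds dy : ℝ)
    (key : ∀ t ∈ Icc (0:ℝ) 1, 0 < s0 + t * ds ∧ s0 + t * ds < 1 ∧ 0 < y0 + t * dy ∧
      1 < 4*(1 - (s0 + t * ds))*(1 - (y0 + t * dy)))
    (hd : ds ≠ 0 ∨ dy ≠ 0) :
    StrictConvexOn ℝ (Icc (0:ℝ) 1)
      (fun t => (1 - (s0 + t * ds)) / (s0 + t * ds) *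
        ((1 - (y0 + t * dy)) / (y0 + t * dy))) := by
  have hX' : ∀ t : ℝ, HasDerivAt (fun u : ℝ => s0 + u * ds) ds t := fun t =>
    (hasDerivAt_mul_const ds).const_add s0
  have hY' : ∀ t : ℝ, HasDerivAt (fun u : ℝ => y0 + u * dy) dy t := fun t =>
    (hasDerivAt_mul_const dy).const_add y0
  have hA : ∀ t : ℝ, s0 + t * ds ≠ 0 →
      HasDerivAt (fun u => (1 - (s0 + u * ds)) / (s0 + u * ds))
        (-ds / (s0 + t * ds)^2) t := by
    intro t ht
    have h1 : HasDerivAt (fun u : ℝ => 1 - (s0 + u * ds)) (-ds) t := (hX' t).const_sub 1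
    have := h1.div (hX' t) ht
    refine this.congr_deriv ?_
    rw [div_eq_div_iff (pow_ne_zero 2 ht) (pow_ne_zero 2 ht)]
    ring
  have hB : ∀ t : ℝ, y0 + t * dy ≠ 0 →
      HasDerivAt (fun u => (1 - (y0 + u * dy)) / (y0 + u * dy))
        (-dy / (y0 + t * dy)^2) t := by
    intro t ht
    have h1 : HasDerivAt (fun u : ℝ => 1 - (y0 + u * dy)) (-dy) t := (hY' t).const_sub 1
    have := h1.div (hY' t) ht
    refine this.congr_deriv ?_
    rw [div_eq_div_iff (pow_ne_zero 2 ht) (pow_ne_zero 2 ht)]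
    ring
  have hA2 : ∀ t : ℝ, s0 + t * ds ≠ 0 →
      HasDerivAt (fun u => -ds / (s0 + u * ds)^2) (2*ds^2 / (s0 + t * ds)^3) t := by
    intro t ht
    have h1 : HasDerivAt (fun u : ℝ => (s0 + u * ds)^2) (2 * (s0 + t * ds) ^ 1 * ds) t :=
      (hX' t).pow 2
    have := (hasDerivAt_const t (-ds)).div h1 (pow_ne_zero 2 ht)
    refine this.congr_deriv ?_
    rw [div_eq_div_iff (pow_ne_zero 2 (pow_ne_zero 2 ht)) (pow_ne_zero 3 ht)]
    ring
  have hB2 : ∀ t : ℝ, y0 + t * dy ≠ 0 →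
      HasDerivAt (fun u => -dy / (y0 + u * dy)^2) (2*dy^2 / (y0 + t * dy)^3) t := by
    intro t ht
    have h1 : HasDerivAt (fun u : ℝ => (y0 + u * dy)^2) (2 * (y0 + t * dy) ^ 1 * dy) t :=
      (hY' t).pow 2
    have := (hasDerivAt_const t (-dy)).div h1 (pow_ne_zero 2 ht)
    refine this.congr_deriv ?_
    rw [div_eq_div_iff (pow_ne_zero 2 (pow_ne_zero 2 ht)) (pow_ne_zero 3 ht)]
    ring
  set h1 : ℝ → ℝ := fun t =>
    (-ds / (s0 + t * ds)^2) * ((1 - (y0 + t * dy)) / (y0 + t * dy))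
      + ((1 - (s0 + t * ds)) / (s0 + t * ds)) * (-dy / (y0 + t * dy)^2) with hh1def
  have hDh : ∀ t : ℝ, s0 + t * ds ≠ 0 → y0 + t * dy ≠ 0 →
      HasDerivAt (fun t => (1 - (s0 + t * ds)) / (s0 + t * ds) *
        ((1 - (y0 + t * dy)) / (y0 + t * dy))) (h1 t) t := fun t hx hy =>
    (hA t hx).mul (hB t hy)
  have hDh1 : ∀ t : ℝ, s0 + t * ds ≠ 0 → y0 + t * dy ≠ 0 →
      HasDerivAt h1
        (((2*ds^2 / (s0 + t * ds)^3) * ((1 - (y0 + t * dy)) / (y0 + t * dy))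
            + (-ds / (s0 + t * ds)^2) * (-dy / (y0 + t * dy)^2))
          + ((-ds / (s0 + t * ds)^2) * (-dy / (y0 + t * dy)^2)
            + ((1 - (s0 + t * ds)) / (s0 + t * ds)) * (2*dy^2 / (y0 + t * dy)^3))) t :=
    fun t hx hy => ((hA2 t hx).mul (hB t hy)).add ((hA t hx).mul (hB2 t hy))
  have hXc : Continuous (fun t : ℝ => s0 + t * ds) :=
    continuous_const.add (continuous_id.mul continuous_const)
  have hYc : Continuous (fun t : ℝ => y0 + t * dy) :=
    continuous_const.add (continuous_id.mul continuous_const)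
  have hcont : ContinuousOn (fun t => (1 - (s0 + t * ds)) / (s0 + t * ds) *
      ((1 - (y0 + t * dy)) / (y0 + t * dy))) (Icc (0:ℝ) 1) := by
    apply ContinuousOn.mul
    · exact ContinuousOn.div (continuous_const.sub hXc).continuousOn hXc.continuousOn
        (fun t ht => (key t ht).1.ne')
    · exact ContinuousOn.div (continuous_const.sub hYc).continuousOn hYc.continuousOn
        (fun t ht => (key t ht).2.2.1.ne')
  apply strictConvexOn_of_deriv2_pos (convex_Icc 0 1) hcont
  intro t ht
  rw [interior_Icc] at ht
  obtain ⟨hX0, hX1, hY0, hQ⟩ := key t (Ioo_subset_Icc_self ht)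
  have ev : deriv (fun t => (1 - (s0 + t * ds)) / (s0 + t * ds) *
      ((1 - (y0 + t * dy)) / (y0 + t * dy))) =ᶠ[nhds t] h1 := by
    filter_upwards [isOpen_Ioo.mem_nhds ht] with u hu
    exact (hDh u (key u (Ioo_subset_Icc_self hu)).1.ne'
      (key u (Ioo_subset_Icc_self hu)).2.2.1.ne').deriv
  have e1 : deriv (deriv (fun t => (1 - (s0 + t * ds)) / (s0 + t * ds) *
      ((1 - (y0 + t * dy)) / (y0 + t * dy)))) t = deriv h1 t := ev.deriv_eq
  have e2 := (hDh1 t hX0.ne' hY0.ne').deriv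
  show 0 < deriv (deriv (fun t => (1 - (s0 + t * ds)) / (s0 + t * ds) *
      ((1 - (y0 + t * dy)) / (y0 + t * dy)))) t
  rw [e1, e2, h2_eq (s0 + t * ds) (y0 + t * dy) ds dy hX0.ne' hY0.ne']
  have hy' : 0 < 1 - (y0 + t * dy) := by nlinarith
  have hQpos : 0 < ds^2*(1 - (y0 + t * dy))*(y0 + t * dy)^2
      + ds*dy*(s0 + t * ds)*(y0 + t * dy)
      + dy^2*(1 - (s0 + t * ds))*(s0 + t * ds)^2 := by
    rcases eq_or_ne dy 0 with hdy | hdy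
    · have hds : ds ≠ 0 := by tauto
      have hds2 : 0 < ds^2 := by positivity
      have h0 : 0 < ds^2*(1 - (y0 + t * dy))*(y0 + t * dy)^2 :=
        mul_pos (mul_pos hds2 hy') (pow_pos hY0 2)
      subst hdy
      nlinarith [h0]
    · have hdy2 : 0 < dy^2 := by positivity
      nlinarith [sq_nonneg (2*(1 - (y0 + t * dy))*(y0 + t * dy)*ds + (s0 + t * ds)*dy),
        mul_pos (mul_pos (show 0 < 4*(1 - (s0 + t * ds))*(1 - (y0 + t * dy)) - 1 by linarith)
          (pow_pos hX0 2)) hdy2, hy', hY0, hX0]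
  exact div_pos (by linarith) (mul_pos (pow_pos hX0 3) (pow_pos hY0 3))

/-- The function `g(x,y) = ((1-x-y)/(x+y))·((1-y)/y)` is strictly convex on
`C_g = {(x,y) : x>0, y>0, x+y<1, x+2y-xy-y² < 3/4}`. -/
theorem strictConvexOn_g :
    StrictConvexOn ℝ
      {p : ℝ × ℝ | 0 < p.1 ∧ 0 < p.2 ∧ p.1 + p.2 < 1 ∧
        p.1 + 2 * p.2 - p.1 * p.2 - p.2 ^ 2 < 3 / 4}
      (fun p : ℝ × ℝ => ((1 - p.1 - p.2) / (p.1 + p.2)) * ((1 - p.2) / p.2)) := by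
  constructor
  · -- convexity of the set
    intro p hp q hq a b ha hb hab
    obtain ⟨hx1, hy1, hs1, hQ1⟩ := hp
    obtain ⟨hx2, hy2, hs2, hQ2⟩ := hq
    have h1 : 1 < 4*(1-(p.1+p.2))*(1-p.2) := by nlinarith
    have h2 : 1 < 4*(1-(q.1+q.2))*(1-q.2) := by nlinarith
    have key := seg_cond (p.1+p.2) p.2 (q.1+q.2) q.2 b (by linarith) hs1 hy1 h1
      (by linarith) hs2 hy2 h2 hb (by linarith)
    obtain ⟨k1, k2, k3, k4⟩ := key
    have ha' : a = 1 - b := by linarith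
    simp only [mem_setOf_eq, Prod.fst_add, Prod.snd_add, Prod.smul_fst, Prod.smul_snd,
      smul_eq_mul]
    refine ⟨comb_pos a b _ _ ha hb hab hx1 hx2, comb_pos a b _ _ ha hb hab hy1 hy2,
      ?_, ?_⟩
    · rw [ha']; linarith [k2]
    · rw [ha']; nlinarith [k4]
  · -- strict inequality
    intro p hp q hq hpq a b ha hb hab
    obtain ⟨hx1, hy1, hs1, hQ1⟩ := hp
    obtain ⟨hx2, hy2, hs2, hQ2⟩ := hq
    have hq1 : 1 < 4*(1-(p.1+p.2))*(1-p.2) := by nlinarith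
    have hq2 : 1 < 4*(1-(q.1+q.2))*(1-q.2) := by nlinarith
    have key : ∀ t ∈ Icc (0:ℝ) 1,
        0 < p.1 + p.2 + t * (q.1 + q.2 - (p.1 + p.2)) ∧
        p.1 + p.2 + t * (q.1 + q.2 - (p.1 + p.2)) < 1 ∧
        0 < p.2 + t * (q.2 - p.2) ∧
        1 < 4*(1 - (p.1 + p.2 + t * (q.1 + q.2 - (p.1 + p.2))))*(1 - (p.2 + t * (q.2 - p.2))) := by
      intro t ht
      have h := seg_cond (p.1+p.2) p.2 (q.1+q.2) q.2 t (by linarith) hs1 hy1 hq1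
        (by linarith) hs2 hy2 hq2 ht.1 ht.2
      have e1 : p.1 + p.2 + t * (q.1 + q.2 - (p.1 + p.2))
          = (1-t)*(p.1+p.2) + t*(q.1+q.2) := by ring
      have e2 : p.2 + t * (q.2 - p.2) = (1-t)*p.2 + t*q.2 := by ring
      rw [e1, e2]
      exact h
    have hd : q.1 + q.2 - (p.1 + p.2) ≠ 0 ∨ q.2 - p.2 ≠ 0 := by
      by_contra hcon
      push_neg at hcon
      apply hpq
      exact Prod.ext (by linarith [hcon.1, hcon.2]) (by linarith [hcon.2])
    have hsc := strict_aux (p.1+p.2) p.2 (q.1+q.2-(p.1+p.2)) (q.2-p.2) key hd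
    have hfin := hsc.2 (left_mem_Icc.mpr zero_le_one) (right_mem_Icc.mpr zero_le_one)
      (by norm_num) ha hb hab
    simp only [smul_eq_mul, mul_zero, mul_one, zero_add] at hfin
    have ha' : a = 1 - b := by linarith
    simp only [Prod.fst_add, Prod.snd_add, Prod.smul_fst, Prod.smul_snd, smul_eq_mul]
    rw [ha']
    rw [ha'] at hfin
    convert hfin using 1
    · ring
    · ring
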